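/- Let L be a finite semi-primary lattice, let μ be a partition, let C ⊆ L_μ be a constant type code with minimum distance D(C) ≥ D, and let r := ⌊(D−1)/2⌋. If φ is a partition with min_{u ∈ L_μ} |S(u,r,φ)| > 0, then |C| ≤ |L_φ| / min_{u ∈ L_μ} |S(u,r,φ)|. -/

import Mathlib

/-- The height of an element: the greatest length of chains from `⊥` to `u`. -/
noncomputable def ht {L : Type*} [Preorder L] (u : L) : ℕ := (Order.height u).toNat

/-- An element `z` is a cycle if the interval `[⊥, z]` is a chain. -/
def IsCycle {L : Type*} [Lattice L] [BoundedOrder L] (z : L) : Prop :=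
  IsChain (· ≤ ·) (Set.Icc (⊥ : L) z)

/-- An element `z` is a dual cycle if the interval `[z, ⊤]` is a chain. -/
def IsDualCycle {L : Type*} [Lattice L] [BoundedOrder L] (z : L) : Prop :=
  IsChain (· ≤ ·) (Set.Icc z (⊤ : L))

/-- A lattice is semi-primary if every element is a join of cycles and a meet of
dual cycles. -/
def IsSemiPrimary (L : Type*) [Lattice L] [BoundedOrder L] : Prop :=
  ∀ u : L, (∃ s : Finset L, (∀ z ∈ s, IsCycle z) ∧ u = s.sup id) ∧
           (∃ s : Finset L, (∀ z ∈ s, IsDualCycle z) ∧ u = s.inf id)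

/-- A finite family of lattice elements is independent. -/
def IndepFun {L : Type*} [Lattice L] [BoundedOrder L] {n : ℕ} (z : Fin n → L) : Prop :=
  ∀ i, ((Finset.univ.erase i).sup z) ⊓ z i = ⊥

/-- A partition is (represented by) a multiset of positive natural numbers. -/
def IsPartition (μ : Multiset ℕ) : Prop := ∀ p ∈ μ, 0 < p

/-- The `i`-th largest part of a partition (0-indexed, 0 if out of range). -/
def partGet (μ : Multiset ℕ) (i : ℕ) : ℕ := ((μ.sort (· ≤ ·)).reverse).getD i 0

/-- Componentwise order on partitions: `μ ≤ λ` iff `μᵢ ≤ λᵢ` for all `i`. -/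
def PartLE (μ lam : Multiset ℕ) : Prop := ∀ i, partGet μ i ≤ partGet lam i

/-- For `λ = (sⁿ)` and `μ ≤ λ`, the partition `λ − μ = (s − μₙ, …, s − μ₁)`. -/
def partSub (s n : ℕ) (μ : Multiset ℕ) : Multiset ℕ :=
  Multiset.filter (fun x => 0 < x)
    (↑((List.range n).map (fun i => s - partGet μ i)) : Multiset ℕ)

/-- `u` has type `μ`: `u` is a join of independent nonzero cycles whose multiset of
heights equals `μ`. -/
def IsTypeOf {L : Type*} [Lattice L] [BoundedOrder L] (u : L) (μ : Multiset ℕ) : Prop :=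
  ∃ (n : ℕ) (z : Fin n → L), (∀ i, IsCycle (z i)) ∧ (∀ i, z i ≠ ⊥) ∧ IndepFun z ∧
    u = Finset.univ.sup z ∧ (↑(List.ofFn (fun i => ht (z i))) : Multiset ℕ) = μ

/-- The lattice metric `d(u,v) = h(u ∨ v) − h(u ∧ v)`. -/
noncomputable def dLat {L : Type*} [Lattice L] (u v : L) : ℕ := ht (u ⊔ v) - ht (u ⊓ v)

/-- The sphere of radius `r` centered at `u`. -/
def sph {L : Type*} [Lattice L] (u : L) (r : ℕ) : Set L := {v | dLat u v ≤ r}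

/-- The `t`-th layer of the sphere of radius `r` centered at `u`. -/
def sphH {L : Type*} [Lattice L] (u : L) (r t : ℕ) : Set L :=
  {v | dLat u v ≤ r ∧ ht v = t}

/-- The elements of type `μ` in the sphere of radius `r` centered at `u`. -/
def sphT {L : Type*} [Lattice L] [BoundedOrder L] (u : L) (r : ℕ) (μ : Multiset ℕ) :
    Set L := {v | dLat u v ≤ r ∧ IsTypeOf v μ}

/-- A finite semi-primary lattice is down-enumerable. -/
def DownEnum (L : Type*) [Lattice L] [BoundedOrder L] : Prop :=
  ∀ (u v : L) (φ μ : Multiset ℕ), IsTypeOf u φ → IsTypeOf v φ →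
    Nat.card {w : L // IsTypeOf w μ ∧ w ≤ u} = Nat.card {w : L // IsTypeOf w μ ∧ w ≤ v}

/-- A finite semi-primary lattice is up-enumerable. -/
def UpEnum (L : Type*) [Lattice L] [BoundedOrder L] : Prop :=
  ∀ (u v : L) (φ μ : Multiset ℕ), IsTypeOf u φ → IsTypeOf v φ →
    Nat.card {w : L // IsTypeOf w μ ∧ u ≤ w} = Nat.card {w : L // IsTypeOf w μ ∧ v ≤ w}

/-- A lattice is enumerable if it is both down- and up-enumerable. -/
def Enumerable (L : Type*) [Lattice L] [BoundedOrder L] : Prop := DownEnum L ∧ UpEnum L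

/-- `α(φ,μ)`: the number of elements of type `μ` below a (any) element of type `φ`. -/
noncomputable def alphaP (L : Type*) [Lattice L] [BoundedOrder L] (φ μ : Multiset ℕ) : ℕ :=
  sSup {n | ∃ u : L, IsTypeOf u φ ∧ n = Nat.card {w : L // IsTypeOf w μ ∧ w ≤ u}}

/-- `β(φ,μ)`: the number of elements of type `μ` above a (any) element of type `φ`. -/
noncomputable def betaP (L : Type*) [Lattice L] [BoundedOrder L] (φ μ : Multiset ℕ) : ℕ :=
  sSup {n | ∃ u : L, IsTypeOf u φ ∧ n = Nat.card {w : L // IsTypeOf w μ ∧ u ≤ w}}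

/-- `α(μ, r₁, …, rₙ)`: the number of chains `x₁ ≤ ⋯ ≤ xₙ ≤ w` with `h(xᵢ) = rᵢ`,
below a (any) element `w` of type `μ`. -/
noncomputable def alphaChain (L : Type*) [Lattice L] [BoundedOrder L] (μ : Multiset ℕ)
    {n : ℕ} (r : Fin n → ℕ) : ℕ :=
  sSup {m | ∃ w : L, IsTypeOf w μ ∧
    m = Nat.card {x : Fin n → L // (∀ i, ht (x i) = r i) ∧ Monotone x ∧ ∀ i, x i ≤ w}}


section SpherePacking

variable {L : Type*} [Lattice L] [Fintype L]

private lemma ht_ne_top (x : L) : Order.height x ≠ ⊤ := by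
  have h : Order.height x ≤ (Fintype.card L : ℕ∞) := by
    apply Order.height_le
    intro p _
    have h2 : p.length + 1 ≤ Fintype.card L := by
      simpa using Fintype.card_le_of_injective _ p.strictMono.injective
    have h3 : p.length ≤ Fintype.card L := by omega
    exact_mod_cast h3
  exact ne_top_of_le_ne_top (ENat.coe_ne_top _) h

private lemma ht_coe (x : L) : (ht x : ℕ∞) = Order.height x :=
  ENat.coe_toNat (ht_ne_top x)

private lemma ht_mono {a b : L} (h : a ≤ b) : ht a ≤ ht b := by
  have := Order.height_mono h
  rw [← ht_coe a, ← ht_coe b] at this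
  exact_mod_cast this

private lemma ht_strictMono {a b : L} (h : a < b) : ht a < ht b := by
  have := Order.height_strictMono h (lt_of_le_of_ne le_top (ht_ne_top a))
  rw [← ht_coe a, ← ht_coe b] at this
  exact_mod_cast this

private lemma eq_of_le_of_ht_le {a b : L} (h : a ≤ b) (hht : ht b ≤ ht a) : a = b := by
  rcases eq_or_lt_of_le h with h' | h'
  · exact h'
  · exact absurd (ht_strictMono h') (by omega)

private lemma exists_covBy_ht {b : L} (hb : 0 < ht b) : ∃ x, x ⋖ b ∧ ht x + 1 = ht b := by
  have hfin : Order.height b < ⊤ := lt_of_le_of_ne le_top (ht_ne_top b)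
  have hlt : ((ht b - 1 : ℕ) : ℕ∞) < Order.height b := by
    rw [← ht_coe b]; exact_mod_cast Nat.sub_lt hb one_pos
  obtain ⟨y, hyb, hy⟩ := (Order.coe_lt_height_iff hfin).mp hlt
  have hyn : ht y = ht b - 1 := by
    have := hy; rw [← ht_coe y] at this; exact_mod_cast this
  refine ⟨y, ⟨hyb, fun z hyz hzb => ?_⟩, by omega⟩
  have h1 := ht_strictMono hyz
  have h2 := ht_strictMono hzb
  omega

variable [IsModularLattice L]

private lemma ht_covBy : ∀ n {a b : L}, ht b = n → a ⋖ b → ht b = ht a + 1 := by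
  intro n
  induction n using Nat.strong_induction_on with
  | _ n ih =>
    intro a b hn h
    have hab := ht_strictMono h.lt
    obtain ⟨x, hx, hxh⟩ := exists_covBy_ht (b := b) (by omega)
    by_cases hax : a = x
    · subst hax; omega
    · have hsup : a ⊔ x = b := by
        have h1 : a < a ⊔ x := by
          rcases eq_or_lt_of_le (le_sup_left : a ≤ a ⊔ x) with h' | h'
          · exfalso
            have hxa : x ≤ a := by
              have := sup_eq_left.mp h'.symm
              exact this
            rcases eq_or_lt_of_le hxa with h'' | h''
            · exact hax h''.symm
            · exact hx.2 h'' h.lt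
          · exact h'
        have h2 : a ⊔ x ≤ b := sup_le h.le hx.le
        rcases eq_or_lt_of_le h2 with h' | h'
        · exact h'
        · exact absurd h' (h.2 h1)
      -- lower modularity
      have hc1 : a ⊓ x ⋖ x := inf_covBy_of_covBy_sup_left (by rw [hsup]; exact h)
      have hc2 : a ⊓ x ⋖ a := inf_covBy_of_covBy_sup_right (by rw [hsup]; exact hx)
      have hihx : ht x = ht (a ⊓ x) + 1 := ih (ht x) (by omega) rfl hc1
      have h3 := ht_strictMono hc2.lt
      omega

private lemma ht_covBy' {a b : L} (h : a ⋖ b) : ht b = ht a + 1 := ht_covBy _ rfl h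

private lemma ht_modular : ∀ n (a b : L), ht a - ht (a ⊓ b) = n →
    ht a + ht b = ht (a ⊔ b) + ht (a ⊓ b) := by
  intro n
  induction n with
  | zero =>
    intro a b hn
    have h1 : ht (a ⊓ b) ≤ ht a := ht_mono inf_le_left
    have h2 : a ⊓ b = a := eq_of_le_of_ht_le inf_le_left (by omega)
    have h3 : a ≤ b := inf_eq_left.mp h2
    rw [sup_eq_right.mpr h3, h2]; omega
  | succ n ih =>
    intro a b hn
    have hlt : a ⊓ b < a := by
      rcases eq_or_lt_of_le (inf_le_left : a ⊓ b ≤ a) with h' | h'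
      · rw [h'] at hn; omega
      · exact h'
    obtain ⟨c, hc, hca⟩ := hlt.exists_covby_le
    have hcb : c ⊓ b = a ⊓ b := le_antisymm
      (inf_le_inf_right b hca) (le_inf hc.lt.le inf_le_right)
    have hbb' : b ⋖ c ⊔ b := covBy_sup_of_inf_covBy_left (by rw [hcb]; exact hc)
    have hab' : a ⊓ (c ⊔ b) = c := by
      rw [inf_comm, sup_inf_assoc_of_le b hca, sup_eq_left]
      exact le_trans (le_of_eq (inf_comm b a)) hc.le
    have hsup : a ⊔ (c ⊔ b) = a ⊔ b := by
      rw [← sup_assoc, sup_eq_left.mpr hca]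
    have hhc : ht c = ht (a ⊓ b) + 1 := by
      have := ht_covBy' hc; omega
    have hhb' : ht (c ⊔ b) = ht b + 1 := ht_covBy' hbb'
    have hha := ht_strictMono hlt
    have ihab := ih a (c ⊔ b) (by rw [hab']; omega)
    rw [hab', hsup] at ihab
    omega

private lemma ht_modular' (a b : L) : ht a + ht b = ht (a ⊔ b) + ht (a ⊓ b) :=
  ht_modular _ a b rfl

private lemma dLat_triangle (u w v : L) : dLat u v ≤ dLat u w + dLat w v := by
  have h1 := ht_modular' (u ⊔ w) (w ⊔ v)
  have h2 := ht_modular' (u ⊓ w) (w ⊓ v)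
  have e1 : ht (u ⊔ v) ≤ ht ((u ⊔ w) ⊔ (w ⊔ v)) :=
    ht_mono (sup_le (le_sup_left.trans le_sup_left) (le_sup_right.trans le_sup_right))
  have e2 : ht w ≤ ht ((u ⊔ w) ⊓ (w ⊔ v)) := ht_mono (le_inf le_sup_right le_sup_left)
  have e3 : ht ((u ⊓ w) ⊔ (w ⊓ v)) ≤ ht w := ht_mono (sup_le inf_le_right inf_le_left)
  have e4 : ht ((u ⊓ w) ⊓ (w ⊓ v)) ≤ ht (u ⊓ v) :=
    ht_mono (le_inf (inf_le_left.trans inf_le_left) (inf_le_right.trans inf_le_right))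
  have e5 : ht (u ⊓ v) ≤ ht (u ⊔ v) := ht_mono (le_trans inf_le_left le_sup_left)
  have e6 : ht (u ⊓ w) ≤ ht (u ⊔ w) := ht_mono (le_trans inf_le_left le_sup_left)
  have e7 : ht (w ⊓ v) ≤ ht (w ⊔ v) := ht_mono (le_trans inf_le_left le_sup_left)
  unfold dLat
  omega

private lemma dLat_comm (u v : L) : dLat u v = dLat v u := by
  unfold dLat; rw [sup_comm, inf_comm]

private lemma eq_of_dLat_eq_zero {u v : L} (h : dLat u v = 0) : u = v := by
  unfold dLat at h
  have h5 : ht (u ⊓ v) ≤ ht (u ⊔ v) := ht_mono (le_trans inf_le_left le_sup_left)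
  have heq : u ⊓ v = u ⊔ v := eq_of_le_of_ht_le (le_trans inf_le_left le_sup_left) (by omega)
  have h1 : u ≤ v := le_trans (le_sup_left.trans heq.symm.le) inf_le_right
  have h2 : v ≤ u := le_trans (le_sup_right.trans heq.symm.le) inf_le_left
  exact le_antisymm h1 h2

end SpherePacking


/-- Sphere packing bound in a finite semi-primary lattice: for a
constant type code `C ⊆ L_μ` with minimum distance at least `D` and `r := ⌊(D−1)/2⌋`,
if `φ` is a partition with `min_{u ∈ L_μ} |S(u,r,φ)| > 0`, then
`|C| ≤ |L_φ| / min_{u ∈ L_μ} |S(u,r,φ)|`. -/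
theorem stmt14 {L : Type*} [Lattice L] [IsModularLattice L] [BoundedOrder L] [Fintype L]
    (hsp : IsSemiPrimary L)
    (μ φ : Multiset ℕ) (hμ : IsPartition μ) (hφ : IsPartition φ)
    (D : ℕ) (C : Set L) (hC : C ⊆ {v : L | IsTypeOf v μ})
    (hmin : ∀ u ∈ C, ∀ v ∈ C, u ≠ v → D ≤ dLat u v)
    (r : ℕ) (hr : r = (D - 1) / 2)
    (m : ℕ) (hm : m = sInf {k : ℕ | ∃ u : L, IsTypeOf u μ ∧ k = (sphT u r φ).ncard})
    (hmpos : 0 < m) :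
    (C.ncard : ℝ) ≤ ({v : L | IsTypeOf v φ}.ncard : ℝ) / (m : ℝ) := by
  classical
  have hkey : ∀ u ∈ C, m ≤ (sphT u r φ).ncard := fun u hu =>
    hm ▸ Nat.sInf_le ⟨u, hC hu, rfl⟩
  have hdisj : ∀ u ∈ C, ∀ v ∈ C, u ≠ v → Disjoint (sphT u r φ) (sphT v r φ) := by
    intro u hu v hv huv
    rw [Set.disjoint_left]
    intro x hxu hxv
    have h1 : dLat u x ≤ r := hxu.1
    have h2 : dLat v x ≤ r := hxv.1
    have h3 : D ≤ dLat u v := hmin u hu v hv huv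
    have h4 : dLat u v ≤ dLat u x + dLat x v := dLat_triangle u x v
    have h5 : dLat x v = dLat v x := dLat_comm x v
    have h6 : dLat u v ≠ 0 := fun h => huv (eq_of_dLat_eq_zero h)
    omega
  -- counting
  set Φ := {v : L | IsTypeOf v φ} with hΦ
  let Cf : Finset L := (Set.toFinite C).toFinset
  let T : L → Finset L := fun u => (Set.toFinite (sphT u r φ)).toFinset
  let Φf : Finset L := (Set.toFinite Φ).toFinset
  have hcard : Cf.card * m ≤ Φf.card := by
    have hbu : (Cf.biUnion T).card = ∑ u ∈ Cf, (T u).card := by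
      apply Finset.card_biUnion
      intro u hu v hv huv
      rw [Function.onFun, Finset.disjoint_left]
      intro x hx hy
      have := Set.disjoint_left.mp
        (hdisj u (by simpa [Cf] using hu) v (by simpa [Cf] using hv) huv)
        (by simpa [T] using hx)
      exact this (by simpa [T] using hy)
    have hsum : Cf.card * m ≤ ∑ u ∈ Cf, (T u).card := by
      calc Cf.card * m = ∑ _u ∈ Cf, m := by rw [Finset.sum_const, smul_eq_mul]
        _ ≤ ∑ u ∈ Cf, (T u).card := by
          apply Finset.sum_le_sum
          intro u hu
          have := hkey u (by simpa [Cf] using hu)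
          rwa [Set.ncard_eq_toFinset_card _ (Set.toFinite _)] at this
    have hsubset : Cf.biUnion T ⊆ Φf := by
      intro x hx
      rw [Finset.mem_biUnion] at hx
      obtain ⟨u, _, hxu⟩ := hx
      have : x ∈ sphT u r φ := by simpa [T] using hxu
      simp only [Φf, Set.Finite.mem_toFinset]
      exact this.2
    calc Cf.card * m ≤ ∑ u ∈ Cf, (T u).card := hsum
      _ = (Cf.biUnion T).card := hbu.symm
      _ ≤ Φf.card := Finset.card_le_card hsubset
  have hCn : C.ncard = Cf.card := Set.ncard_eq_toFinset_card _ _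
  have hΦn : Φ.ncard = Φf.card := Set.ncard_eq_toFinset_card _ _
  rw [le_div_iff₀ (by exact_mod_cast hmpos)]
  rw [hCn, hΦn]
  exact_mod_cast hcard
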